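/- Let ⃗T = (T, ρ) be a rooted tree, with functions h_α defined recursively by h_ρ = x_ρ, h_α = f(h_{α̂}, x_α), and let F_⃗T: ℝ^{V(T)} → ℝ^{V(T)} be defined componentwise by F_ρ = x_ρ and F_α = φ(h_{α̂}, x_α) for α ≠ ρ, where φ(x_1,x_2) = x_2 for x_1 ≤ 0 and φ(x_1,x_2) = x_2 − b(x_1) for x_1 > 0. Then F_⃗T is a homeomorphism of ℝ^{V(T)} satisfying F_⃗T({h_α ≥ 0}) = {x : x_β ≥ 0 for all β ≤ α} for every vertex α. -/

import Mathlib

noncomputable def bbar (b : ℝ → ℝ) (t : ℝ) : ℝ := if 0 < t then b t else 0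

lemma bbar_continuous (b : ℝ → ℝ) (hb_cont : ContinuousOn b (Set.Ioi 0))
    (hb_lim : Filter.Tendsto b (nhdsWithin 0 (Set.Ioi 0)) (nhds 0)) :
    Continuous (bbar b) := by
  rw [continuous_iff_continuousAt]
  intro t
  rcases lt_trichotomy t 0 with ht | rfl | ht
  · have he : bbar b =ᶠ[nhds t] fun _ => (0 : ℝ) := by
      filter_upwards [Iio_mem_nhds ht] with s hs
      simp [bbar, not_lt.mpr (le_of_lt (Set.mem_Iio.mp hs))]
    exact (continuousAt_const (y := (0:ℝ))).congr he.symm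
  · have h0 : bbar b 0 = 0 := by simp [bbar]
    have hmain : Filter.Tendsto (bbar b)
        (nhdsWithin 0 (Set.Iic 0) ⊔ nhdsWithin 0 (Set.Ioi 0)) (nhds 0) := by
      rw [Filter.tendsto_sup]
      constructor
      · apply Filter.Tendsto.congr' _ (tendsto_const_nhds (x := (0:ℝ)))
        filter_upwards [self_mem_nhdsWithin] with s hs
        simp [bbar, not_lt.mpr (Set.mem_Iic.mp hs)]
      · apply hb_lim.congr'
        filter_upwards [self_mem_nhdsWithin] with s hs
        simp [bbar, Set.mem_Ioi.mp hs]
    rw [nhdsLE_sup_nhdsGT] at hmain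
    rwa [ContinuousAt, h0]
  · have he : bbar b =ᶠ[nhds t] b := by
      filter_upwards [Ioi_mem_nhds ht] with s hs
      simp [bbar, Set.mem_Ioi.mp hs]
    exact ((hb_cont t ht).continuousAt (Ioi_mem_nhds ht)).congr he.symm

def myWFR {V : Type*} [Finite V] [PartialOrder V] : WellFoundedRelation V :=
  ⟨(· < ·), (Finite.to_wellFoundedLT).wf⟩

noncomputable def Hfun {V : Type*} [Finite V] [DecidableEq V] [PartialOrder V]
    (ρ : V) (parent : V → V) (hpar : ∀ α, α ≠ ρ → parent α < α)
    (b : ℝ → ℝ) (f : ℝ → ℝ → ℝ) (α : V) (y : V → ℝ) : ℝ :=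
  if hα : α = ρ then y ρ
  else
    f (Hfun ρ parent hpar b f (parent α) y)
      (y α + bbar b (Hfun ρ parent hpar b f (parent α) y))
termination_by myWFR.2.wrap α
decreasing_by exact hpar α hα

open Classical in
/-- The comparison map `F_{⃗T}` between the smoothed and rectilinear arboreal
hypersurfaces of a rooted tree `(T, ρ)`: with `h_ρ = x_ρ`,
`h_α = f(h_{α̂}, x_α)` and `φ(x₁, x₂) = x₂` for `x₁ ≤ 0`, `= x₂ - b x₁` for
`x₁ > 0`, the map `F` with components `F_ρ = x_ρ`, `F_α = φ(h_{α̂}, x_α)` is a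
homeomorphism of `ℝ^{V(T)}` carrying each half-space `{h_α ≥ 0}` onto the
quadrant `{x_β ≥ 0 for all β ≤ α}`. -/
theorem stmt16 {V : Type*} [Fintype V] [DecidableEq V] [PartialOrder V]
    (ρ : V) (hroot_min : ∀ v, ρ ≤ v)
    (hchain : ∀ a b c : V, a ≤ c → b ≤ c → a ≤ b ∨ b ≤ a)
    (parent : V → V) (hpar : ∀ α, α ≠ ρ → parent α ⋖ α)
    (b : ℝ → ℝ) (hb_nonpos : ∀ t, 0 < t → b t ≤ 0)
    (hb_cont : ContinuousOn b (Set.Ioi 0))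
    (hb_lim : Filter.Tendsto b (nhdsWithin 0 (Set.Ioi 0)) (nhds 0))
    (hb_large : ∃ T : ℝ, ∀ t, T ≤ t → b t = 0)
    (f : ℝ → ℝ → ℝ)
    (hf_cont : Continuous fun q : ℝ × ℝ => f q.1 q.2)
    (hf_zero : ∀ x₁ x₂, f x₁ x₂ = 0 ↔ ((x₁ = 0 ∧ 0 ≤ x₂) ∨ (0 < x₁ ∧ x₂ = b x₁)))
    (hf_pos : ∀ x₁ x₂, 0 < f x₁ x₂ ↔ (0 < x₁ ∧ b x₁ < x₂))
    (h : V → (V → ℝ) → ℝ)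
    (hroot : ∀ x, h ρ x = x ρ)
    (hrec : ∀ α, α ≠ ρ → ∀ x, h α x = f (h (parent α) x) (x α)) :
    IsHomeomorph (fun (x : V → ℝ) (γ : V) =>
      if γ = ρ then x ρ
      else if 0 < h (parent γ) x then x γ - b (h (parent γ) x) else x γ) ∧
    ∀ α : V,
      (fun (x : V → ℝ) (γ : V) =>
          if γ = ρ then x ρ
          else if 0 < h (parent γ) x then x γ - b (h (parent γ) x) else x γ) ''
        {x | 0 ≤ h α x} = {x : V → ℝ | ∀ β, β ≤ α → 0 ≤ x β} := by
  have hpar' : ∀ α, α ≠ ρ → parent α < α := fun α hα => (hpar α hα).lt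
  set Hf : V → (V → ℝ) → ℝ := Hfun ρ parent hpar' b f with hHfdef
  set Fm : (V → ℝ) → (V → ℝ) := fun x γ =>
    if γ = ρ then x ρ
    else if 0 < h (parent γ) x then x γ - b (h (parent γ) x) else x γ with hFmdef
  set G : (V → ℝ) → (V → ℝ) := fun y γ =>
    if γ = ρ then y ρ else y γ + bbar b (Hf (parent γ) y) with hGdef
  have ind : ∀ (P : V → Prop), (∀ α, (∀ β, β < α → P β) → P α) → ∀ α, P α :=
    fun P hP α => WellFoundedLT.induction α hP
  -- unfolding lemmas for Hf
  have Hf_root : ∀ y, Hf ρ y = y ρ := by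
    intro y; rw [hHfdef, Hfun]; simp
  have Hf_step : ∀ α, α ≠ ρ → ∀ y,
      Hf α y = f (Hf (parent α) y) (y α + bbar b (Hf (parent α) y)) := by
    intro α hα y; conv_lhs => rw [hHfdef, Hfun]
    simp [hα, ← hHfdef]
  -- basic form of Fm
  have Fm_root : ∀ x, Fm x ρ = x ρ := by intro x; rw [hFmdef]; simp
  have Fm_alt : ∀ x γ, γ ≠ ρ → Fm x γ = x γ - bbar b (h (parent γ) x) := by
    intro x γ hγ; rw [hFmdef]; simp only [if_neg hγ, bbar]
    split_ifs with h1
    · rfl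
    · rw [sub_zero]
  have G_root : ∀ y, G y ρ = y ρ := by intro y; rw [hGdef]; simp
  have G_alt : ∀ y γ, γ ≠ ρ → G y γ = y γ + bbar b (Hf (parent γ) y) := by
    intro y γ hγ; rw [hGdef]; simp [hγ]
  -- h ∘ G = Hf
  have hHG : ∀ α, ∀ y : V → ℝ, h α (G y) = Hf α y := by
    refine ind _ ?_
    intro α IH y
    by_cases hα : α = ρ
    · subst hα; rw [hroot, Hf_root, G_root]
    · rw [hrec α hα, Hf_step α hα, IH (parent α) (hpar' α hα), G_alt y α hα]
  -- Fm ∘ G = id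
  have hFG : ∀ y, Fm (G y) = y := by
    intro y; funext γ
    by_cases hγ : γ = ρ
    · subst hγ; rw [Fm_root, G_root]
    · rw [Fm_alt _ γ hγ, hHG (parent γ) y, G_alt y γ hγ]; ring
  -- Hf ∘ Fm = h
  have hHF : ∀ α, ∀ x : V → ℝ, Hf α (Fm x) = h α x := by
    refine ind _ ?_
    intro α IH x
    by_cases hα : α = ρ
    · subst hα; rw [Hf_root, hroot, Fm_root]
    · rw [Hf_step α hα, IH (parent α) (hpar' α hα), hrec α hα, Fm_alt x α hα]
      congr 1; ring
  -- G ∘ Fm = id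
  have hGF : ∀ x, G (Fm x) = x := by
    intro x; funext γ
    by_cases hγ : γ = ρ
    · subst hγ; rw [G_root, Fm_root]
    · rw [G_alt _ γ hγ, hHF (parent γ) x, Fm_alt x γ hγ]; ring
  -- continuity
  have hbb : Continuous (bbar b) := bbar_continuous b hb_cont hb_lim
  have hhcont : ∀ α, Continuous (h α) := by
    refine ind _ ?_
    intro α IH
    by_cases hα : α = ρ
    · have : h α = fun x => x ρ := by rw [hα]; exact funext hroot
      rw [this]; exact continuous_apply ρ
    · have : h α = fun x => f (h (parent α) x) (x α) := funext (hrec α hα)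
      rw [this]
      exact hf_cont.comp ((IH (parent α) (hpar' α hα)).prodMk (continuous_apply α))
  have hHcont : ∀ α, Continuous (Hf α) := by
    refine ind _ ?_
    intro α IH
    by_cases hα : α = ρ
    · have : Hf α = fun y => y ρ := by rw [hα]; exact funext Hf_root
      rw [this]; exact continuous_apply ρ
    · have : Hf α = fun y =>
          f (Hf (parent α) y) (y α + bbar b (Hf (parent α) y)) :=
        funext (Hf_step α hα)
      rw [this]
      have hp := IH (parent α) (hpar' α hα)
      exact hf_cont.comp (hp.prodMk ((continuous_apply α).add (hbb.comp hp)))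
  have hFcont : Continuous Fm := by
    apply continuous_pi; intro γ
    by_cases hγ : γ = ρ
    · have : (fun x : V → ℝ => Fm x γ) = fun x => x ρ := by
        rw [hγ]; exact funext Fm_root
      rw [this]; exact continuous_apply ρ
    · have : (fun x : V → ℝ => Fm x γ) = fun x => x γ - bbar b (h (parent γ) x) :=
        funext fun x => Fm_alt x γ hγ
      rw [this]
      exact (continuous_apply γ).sub (hbb.comp (hhcont (parent γ)))
  have hGcont : Continuous G := by
    apply continuous_pi; intro γ
    by_cases hγ : γ = ρ
    · have : (fun y : V → ℝ => G y γ) = fun y => y ρ := by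
        rw [hγ]; exact funext G_root
      rw [this]; exact continuous_apply ρ
    · have : (fun y : V → ℝ => G y γ) = fun y => y γ + bbar b (Hf (parent γ) y) :=
        funext fun y => G_alt y γ hγ
      rw [this]
      exact (continuous_apply γ).add (hbb.comp (hHcont (parent γ)))
  have hFhomeo : IsHomeomorph Fm :=
    Homeomorph.isHomeomorph
      ⟨⟨Fm, G, hGF, hFG⟩, hFcont, hGcont⟩
  -- sign of f
  have hfsign : ∀ x₁ x₂, 0 ≤ f x₁ x₂ ↔
      ((0 < x₁ ∧ b x₁ ≤ x₂) ∨ (x₁ = 0 ∧ 0 ≤ x₂)) := by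
    intro x₁ x₂
    constructor
    · intro h0
      rcases eq_or_lt_of_le h0 with heq | hlt
      · rcases (hf_zero x₁ x₂).mp heq.symm with ⟨h1, h2⟩ | ⟨h1, h2⟩
        · exact Or.inr ⟨h1, h2⟩
        · exact Or.inl ⟨h1, le_of_eq h2.symm⟩
      · rcases (hf_pos x₁ x₂).mp hlt with ⟨h1, h2⟩
        exact Or.inl ⟨h1, le_of_lt h2⟩
    · rintro (⟨h1, h2⟩ | ⟨h1, h2⟩)
      · rcases eq_or_lt_of_le h2 with heq | hlt
        · exact le_of_eq ((hf_zero x₁ x₂).mpr (Or.inr ⟨h1, heq.symm⟩)).symm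
        · exact le_of_lt ((hf_pos x₁ x₂).mpr ⟨h1, hlt⟩)
      · exact le_of_eq ((hf_zero x₁ x₂).mpr (Or.inl ⟨h1, h2⟩)).symm
  -- sign of Hf
  have hsign : ∀ α, ∀ y : V → ℝ, (0 ≤ Hf α y ↔ ∀ β, β ≤ α → 0 ≤ y β) := by
    refine ind _ ?_
    intro α IH y
    by_cases hα : α = ρ
    · rw [hα, Hf_root]
      constructor
      · intro h0 β hβ
        have : β = ρ := le_antisymm hβ (hroot_min β)
        rw [this]; exact h0
      · intro hall; exact hall ρ le_rfl
    · have hcov : parent α ⋖ α := hpar α hα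
      have hle : ∀ β, β ≤ α ↔ (β ≤ parent α ∨ β = α) := by
        intro β
        constructor
        · intro hβ
          rcases hchain β (parent α) α hβ hcov.le with h1 | h1
          · exact Or.inl h1
          · rcases eq_or_lt_of_le h1 with he | hlt
            · exact Or.inl (he ▸ le_rfl)
            · right
              rcases eq_or_lt_of_le hβ with he2 | hlt2
              · exact he2
              · exact absurd hlt2 (hcov.2 hlt)
        · rintro (h1 | rfl)
          · exact h1.trans hcov.le
          · exact le_rfl
      rw [Hf_step α hα]
      set t := Hf (parent α) y with htdef
      have key : (0 ≤ f t (y α + bbar b t)) ↔ (0 ≤ t ∧ 0 ≤ y α) := by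
        rw [hfsign]
        rcases lt_trichotomy t 0 with h1 | h1 | h1
        · constructor
          · rintro (⟨h2, _⟩ | ⟨h2, _⟩)
            · exact absurd h2 (lt_asymm h1)
            · exact absurd h2 (ne_of_lt h1)
          · rintro ⟨h2, _⟩; exact absurd h1 (not_lt.mpr h2)
        · rw [h1]
          have : bbar b 0 = 0 := by simp [bbar]
          rw [this]
          constructor
          · rintro (⟨h2, _⟩ | ⟨_, h2⟩)
            · exact absurd h2 (lt_irrefl 0)
            · exact ⟨le_rfl, by linarith⟩
          · rintro ⟨_, h2⟩; exact Or.inr ⟨rfl, by linarith⟩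
        · have hb' : bbar b t = b t := if_pos h1
          rw [hb']
          constructor
          · rintro (⟨_, h2⟩ | ⟨h2, _⟩)
            · exact ⟨h1.le, by linarith⟩
            · exact absurd h1 (by rw [h2]; exact lt_irrefl 0)
          · rintro ⟨_, h2⟩; exact Or.inl ⟨h1, by linarith⟩
      rw [key, IH (parent α) (hpar' α hα) y]
      constructor
      · rintro ⟨h1, h2⟩ β hβ
        rcases (hle β).mp hβ with h3 | rfl
        · exact h1 β h3
        · exact h2
      · intro hall
        exact ⟨fun β hβ => hall β ((hle β).mpr (Or.inl hβ)), hall α le_rfl⟩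
  refine ⟨hFhomeo, ?_⟩
  intro α
  ext y
  simp only [Set.mem_image, Set.mem_setOf_eq]
  constructor
  · rintro ⟨x, hx, rfl⟩
    intro β hβ
    have h0 : 0 ≤ Hf α (Fm x) := by rw [hHF α x]; exact hx
    exact (hsign α (Fm x)).mp h0 β hβ
  · intro hy
    refine ⟨G y, ?_, hFG y⟩
    show 0 ≤ h α (G y)
    rw [hHG α y]
    exact (hsign α y).mpr hy
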